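/- (Lemma 4 on the Toda lattice.) Let a > 0, let u(n,r,θ) be smooth in (r,θ) for each n ∈ ℤ, let g : ℝ → ℂ be continuous and G : ℝ → ℂ an antiderivative of g (G′ = g), and assume the boundary condition u_r(n,a,θ) = −(i/a)u_θ(n,a,θ) + g(θ) for all n ∈ ℤ and θ ∈ ℝ. If φ₂ : ℤ × ℝ → ℂ (differentiable in θ) satisfies equation (V2), then the function φ₃(n,θ) = e^{−2inθ + iaG(θ)}·φ₂(n,θ) satisfies equation (V3). -/

import Mathlib

/-- The radial partial derivative `u_r(n, a, θ)`. -/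
noncomputable def uR (u : ℤ → ℝ → ℝ → ℂ) (a : ℝ) (n : ℤ) (θ : ℝ) : ℂ :=
  deriv (fun r : ℝ => u n r θ) a

/-- The angular partial derivative `u_θ(n, a, θ)`. -/
noncomputable def uT (u : ℤ → ℝ → ℝ → ℂ) (a : ℝ) (n : ℤ) (θ : ℝ) : ℂ :=
  deriv (fun t : ℝ => u n a t) θ

/-- `ω(n, a, θ) = exp(u(n,a,θ) − u(n+1,a,θ))`. -/
noncomputable def om (u : ℤ → ℝ → ℝ → ℂ) (a : ℝ) (n : ℤ) (θ : ℝ) : ℂ :=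
  Complex.exp (u n a θ - u (n + 1) a θ)

/-- `u(n,·,·)` is smooth in `(r,θ)` on `{r > 0}` for every `n`. -/
def SmoothOnHalf (u : ℤ → ℝ → ℝ → ℂ) : Prop :=
  ∀ n : ℤ, ContDiffOn ℝ (⊤ : ℕ∞) (fun p : ℝ × ℝ => u n p.1 p.2) {p : ℝ × ℝ | 0 < p.1}

/-- Equation (V1): the θ-part, restricted to `r = a`, of the original Lax pair of the
polar two-dimensional Toda lattice. -/
def V1 (a : ℝ) (u : ℤ → ℝ → ℝ → ℂ) (φ : ℤ → ℝ → ℂ) : Prop :=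
  ∀ (n : ℤ) (θ : ℝ), HasDerivAt (φ n)
    (Complex.I * a * Complex.exp (Complex.I * θ) / 2 * φ (n + 1) θ
      - Complex.I * a / 2 * (uR u a n θ - Complex.I / a * uT u a n θ) * φ n θ
      + Complex.I * a * Complex.exp (-(Complex.I * θ)) / 2 * om u a (n - 1) θ * φ (n - 1) θ) θ

/-- Equation (V2): the θ-part, restricted to `r = a`, of the Lax pair obtained from the
reflection `θ → −θ`. -/
def V2 (a : ℝ) (u : ℤ → ℝ → ℝ → ℂ) (φ : ℤ → ℝ → ℂ) : Prop :=
  ∀ (n : ℤ) (θ : ℝ), HasDerivAt (φ n)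
    (Complex.I * a * Complex.exp (-(Complex.I * θ)) / 2 * φ (n + 1) θ
      - Complex.I * a / 2 * (uR u a n θ + Complex.I / a * uT u a n θ) * φ n θ
      + Complex.I * a * Complex.exp (Complex.I * θ) / 2 * om u a (n - 1) θ * φ (n - 1) θ) θ

/-- Equation (V3): the θ-part, restricted to `r = a`, of the Lax pair obtained from the
Kelvin transformation. -/
def V3 (a : ℝ) (u : ℤ → ℝ → ℝ → ℂ) (φ : ℤ → ℝ → ℂ) : Prop :=
  ∀ (n : ℤ) (θ : ℝ), HasDerivAt (φ n)
    (Complex.I * a * Complex.exp (Complex.I * θ) / 2 * φ (n + 1) θ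
      - Complex.I * a / 2 * (-uR u a n θ + 4 * n / a - Complex.I / a * uT u a n θ) * φ n θ
      + Complex.I * a * Complex.exp (-(Complex.I * θ)) / 2 * om u a (n - 1) θ * φ (n - 1) θ) θ

/-- Equation (V4): the θ-part, restricted to `r = a`, of the Lax pair obtained from the
reflection `ũ(n) = −u(−n)`. -/
def V4 (a : ℝ) (u : ℤ → ℝ → ℝ → ℂ) (φ : ℤ → ℝ → ℂ) : Prop :=
  ∀ (n : ℤ) (θ : ℝ), HasDerivAt (φ n)
    (Complex.I * a * Complex.exp (Complex.I * θ) / 2 * φ (n - 1) θ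
      - Complex.I * a / 2 * (-uR u a n θ + Complex.I / a * uT u a n θ) * φ n θ
      + Complex.I * a * Complex.exp (-(Complex.I * θ)) / 2 * om u a n θ * φ (n + 1) θ) θ

/-- Lemma 4 on the Toda lattice: under the boundary condition
`u_r(n,a,θ) = −(i/a) u_θ(n,a,θ) + g(θ)`, if `φ₂` solves (V2) then
`φ₃(n,θ) = e^{−2inθ + iaG(θ)} φ₂(n,θ)` solves (V3), where `G′ = g`. -/
theorem toda_lemma4 (a : ℝ) (ha : 0 < a) (u : ℤ → ℝ → ℝ → ℂ) (hu : SmoothOnHalf u)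
    (g G : ℝ → ℂ) (hg : Continuous g) (hG : ∀ θ : ℝ, HasDerivAt G (g θ) θ)
    (hbc : ∀ (n : ℤ) (θ : ℝ), uR u a n θ = -(Complex.I / a) * uT u a n θ + g θ)
    (φ₂ : ℤ → ℝ → ℂ) (hφ₂ : V2 a u φ₂) :
    V3 a u (fun n θ =>
      Complex.exp (-(2 * Complex.I * n * θ) + Complex.I * a * G θ) * φ₂ n θ) := by
  intro n θ
  have hI : (a:ℂ) ≠ 0 := by exact_mod_cast ha.ne'
  have hre : HasDerivAt (fun t : ℝ => (t : ℂ)) 1 θ := by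
    have h0 := Complex.ofRealCLM.hasDerivAt (x := θ)
    simp only [Complex.ofRealCLM_apply] at h0
    exact h0
  have h1 : HasDerivAt (fun t : ℝ => -(2 * Complex.I * (n:ℂ) * (t:ℂ)) + Complex.I * a * G t)
      (-(2 * Complex.I * (n:ℂ)) + Complex.I * a * g θ) θ := by
    have := ((hre.const_mul (2 * Complex.I * (n:ℂ))).neg).add ((hG θ).const_mul (Complex.I * a))
    rw [mul_one] at this
    exact this
  have hE := h1.cexp
  have hφ := hφ₂ n θ
  have hprod := hE.mul hφ
  convert hprod using 1
  · rfl
  · rfl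
  have e1 : Complex.exp (-(2 * Complex.I * ((n:ℂ)+1) * θ) + Complex.I * a * G θ)
      = Complex.exp (-(2 * Complex.I * (n:ℂ) * θ) + Complex.I * a * G θ)
        * Complex.exp (-(Complex.I * θ)) * Complex.exp (-(Complex.I * θ)) := by
    rw [← Complex.exp_add, ← Complex.exp_add]; ring_nf
  have e2 : Complex.exp (-(2 * Complex.I * ((n:ℂ)-1) * θ) + Complex.I * a * G θ)
      = Complex.exp (-(2 * Complex.I * (n:ℂ) * θ) + Complex.I * a * G θ)
        * Complex.exp (Complex.I * θ) * Complex.exp (Complex.I * θ) := by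
    rw [← Complex.exp_add, ← Complex.exp_add]; ring_nf
  have hww : Complex.exp (Complex.I * (θ:ℂ)) * Complex.exp (-(Complex.I * (θ:ℂ))) = 1 := by
    rw [← Complex.exp_add]; simp
  push_cast
  rw [e1, e2, hbc n θ]
  linear_combination (Complex.I * a / 2
      * Complex.exp (-(2 * Complex.I * (n:ℂ) * θ) + Complex.I * a * G θ)
      * (φ₂ (n + 1) θ * Complex.exp (-(Complex.I * (θ:ℂ)))
        + om u a (n - 1) θ * φ₂ (n - 1) θ * Complex.exp (Complex.I * (θ:ℂ)))) * hww
    + (-(2 * Complex.I * Complex.exp (-(2 * Complex.I * (n:ℂ) * θ) + Complex.I * a * G θ)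
      * (n:ℂ) * φ₂ n θ)) * mul_inv_cancel₀ hI
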